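/- Suppose char k ≠ 2 and (α, β) = (q, q⁻¹). Then dim_k Im dₙ = 2n−1 for n even and 2n+1 for n odd; consequently dim_k Ker d_{n+1} − dim_k Im dₙ = 2 for every n > 0, i.e. dim_k HHⁿ(Λ, ₁Λ_ψ) = 2. -/

import Mathlib

/-- The matrix of the differential `dₙ : Λⁿ → Λ^{n+1}` of the complex computing
`HH^*(Λ, ₁Λ_ψ)` for `ψ(x) = αx`, `ψ(y) = βy`, in the standard basis
`{eᵢ, xeᵢ, yeᵢ, yxeᵢ}` (encoded by `Fin 4` as `0 ↦ eᵢ, 1 ↦ xeᵢ, 2 ↦ yeᵢ, 3 ↦ yxeᵢ`):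
`eᵢ^{n−1} ↦ [1+(−1)ⁿqⁱα]xeᵢⁿ + [q^{n−i−1}+(−1)ⁿβ]ye^n_{i+1}`,
`xeᵢ^{n−1} ↦ [q^{n−i−1}+(−1)^{n+1}qβ]yxe^n_{i+1}`,
`yeᵢ^{n−1} ↦ [−q+(−1)ⁿqⁱα]yxeᵢⁿ`, `yxeᵢ^{n−1} ↦ 0`. -/
def Dmat (k : Type) [Field k] (q α β : k) (n : ℕ) :
    Matrix (Fin (n + 1) × Fin 4) (Fin n × Fin 4) k := fun jb ia =>
  if jb.2 = 1 ∧ ia.2 = 0 ∧ (jb.1 : ℕ) = (ia.1 : ℕ) then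
    1 + (-1 : k) ^ n * q ^ (ia.1 : ℕ) * α
  else if jb.2 = 2 ∧ ia.2 = 0 ∧ (jb.1 : ℕ) = (ia.1 : ℕ) + 1 then
    q ^ (n - (ia.1 : ℕ) - 1) + (-1 : k) ^ n * β
  else if jb.2 = 3 ∧ ia.2 = 1 ∧ (jb.1 : ℕ) = (ia.1 : ℕ) + 1 then
    q ^ (n - (ia.1 : ℕ) - 1) + (-1 : k) ^ (n + 1) * q * β
  else if jb.2 = 3 ∧ ia.2 = 2 ∧ (jb.1 : ℕ) = (ia.1 : ℕ) then
    -q + (-1 : k) ^ n * q ^ (ia.1 : ℕ) * α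
  else 0

/-- The differential `dₙ : Λⁿ → Λ^{n+1}` as a `k`-linear map. -/
noncomputable def dMap (k : Type) [Field k] (q α β : k) (n : ℕ) :
    (Fin n × Fin 4 → k) →ₗ[k] (Fin (n + 1) × Fin 4 → k) :=
  (Dmat k q α β n).mulVecLin

open Matrix Module Submodule

/-- Linear independence of a family of vectors each having a "private coordinate". -/
lemma li_private {k : Type} [Field k] {ι J : Type} [Fintype ι] (v : ι → J → k) (p : ι → J)
    (hne : ∀ i, v i (p i) ≠ 0) (hz : ∀ i i', i' ≠ i → v i' (p i) = 0) :
    LinearIndependent k v := by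
  rw [Fintype.linearIndependent_iff]
  intro g hg i
  have h := congrFun hg (p i)
  simp only [Finset.sum_apply, Pi.smul_apply, smul_eq_mul, Pi.zero_apply] at h
  rw [Finset.sum_eq_single i (fun i' _ hi' => by rw [hz i i' hi', mul_zero]) (by simp)] at h
  exact (mul_eq_zero.mp h).resolve_right (hne i)


open Matrix in
lemma dmat_col1 (k : Type) [Field k] (q : k) (n : ℕ) (i : Fin n) :
    (Dmat k q q q⁻¹ n)ᵀ (i, 1) =
      (q ^ (n - (i : ℕ) - 1) + (-1 : k) ^ (n + 1) * q * q⁻¹) •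
        (Pi.single (i.succ, (3 : Fin 4)) (1 : k) : Fin (n + 1) × Fin 4 → k) := by
  funext jb; obtain ⟨j, b⟩ := jb
  simp only [Matrix.transpose_apply, Dmat, Pi.smul_apply, smul_eq_mul, Pi.single_apply,
    Prod.mk.injEq]
  fin_cases b <;> norm_num [Fin.ext_iff] <;> split_ifs <;> simp_all

open Matrix in
lemma dmat_col2 (k : Type) [Field k] (q : k) (n : ℕ) (i : Fin n) :
    (Dmat k q q q⁻¹ n)ᵀ (i, 2) =
      (-q + (-1 : k) ^ n * q ^ (i : ℕ) * q) •
        (Pi.single (i.castSucc, (3 : Fin 4)) (1 : k) : Fin (n + 1) × Fin 4 → k) := by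
  funext jb; obtain ⟨j, b⟩ := jb
  simp only [Matrix.transpose_apply, Dmat, Pi.smul_apply, smul_eq_mul, Pi.single_apply,
    Prod.mk.injEq]
  fin_cases b <;> norm_num [Fin.ext_iff] <;> split_ifs <;> simp_all

open Matrix in
lemma dmat_col3 (k : Type) [Field k] (q : k) (n : ℕ) (i : Fin n) :
    (Dmat k q q q⁻¹ n)ᵀ (i, 3) = 0 := by
  funext jb; obtain ⟨j, b⟩ := jb
  simp only [Matrix.transpose_apply, Dmat, Pi.zero_apply]
  fin_cases b <;> norm_num [Fin.ext_iff, show ((3 : Fin 4) : ℕ) = 3 from rfl] <;> (try split_ifs <;> simp_all)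

open Matrix in
lemma dmat_col0a (k : Type) [Field k] (q : k) (n : ℕ) (i i' : Fin n) :
    (Dmat k q q q⁻¹ n)ᵀ (i, 0) (i'.castSucc, 1) =
      if i' = i then 1 + (-1 : k) ^ n * q ^ (i : ℕ) * q else 0 := by
  simp only [Matrix.transpose_apply, Dmat, Fin.coe_castSucc]
  norm_num [Fin.ext_iff]
  try split_ifs <;> simp_all

open Matrix in
lemma dmat_col0b (k : Type) [Field k] (q : k) (n : ℕ) (i : Fin n) (j : Fin (n + 1)) :
    (Dmat k q q q⁻¹ n)ᵀ (i, 0) (j, 3) = 0 := by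
  simp only [Matrix.transpose_apply, Dmat]
  norm_num [Fin.ext_iff, show ((3 : Fin 4) : ℕ) = 3 from rfl] <;> (try split_ifs <;> simp_all)

lemma rank_dMap (k : Type) [Field k] (q : k) (hq : q ≠ 0)
    (hq' : ∀ m : ℕ, 0 < m → q ^ m ≠ 1)
    (hchar : ringChar k ≠ 2)
    (n : ℕ) (hn : 1 ≤ n) :
    Module.finrank k ↥(LinearMap.range (dMap k q q q⁻¹ n)) =
      if Even n then 2 * n - 1 else 2 * n + 1 := by
  have hne1 : (-1 : k) ≠ 1 := Ring.neg_one_ne_one_of_char_ne_two hchar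
  have hpow1 : ∀ m : ℕ, q ^ m ≠ -1 := by
    intro m h
    rcases Nat.eq_zero_or_pos m with hm | hm
    · rw [hm, pow_zero] at h; exact hne1 h.symm
    · have : q ^ (m * 2) = 1 := by rw [pow_mul, h]; ring
      exact hq' (m * 2) (by omega) this
  set M := Dmat k q q q⁻¹ n with hM
  -- the scalar coefficients
  set c1 : Fin n → k := fun i => 1 + (-1 : k) ^ n * q ^ (i : ℕ) * q with hc1def
  set c3 : Fin n → k := fun i => q ^ (n - (i : ℕ) - 1) + (-1 : k) ^ (n + 1) * q * q⁻¹ with hc3def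
  set c4 : Fin n → k := fun i => -q + (-1 : k) ^ n * q ^ (i : ℕ) * q with hc4def
  have hqq : q * q⁻¹ = 1 := mul_inv_cancel₀ hq
  have hc3' : ∀ i : Fin n, c3 i = q ^ (n - (i : ℕ) - 1) - (-1 : k) ^ n := by
    intro i; simp only [hc3def, pow_succ, mul_assoc, hqq]
    ring
  have hc1 : ∀ i : Fin n, c1 i ≠ 0 := by
    intro i h
    rcases Nat.even_or_odd n with he | ho
    · rw [hc1def] at h; simp only [he.neg_one_pow] at h
      exact hpow1 ((i : ℕ) + 1) (by rw [pow_succ]; linear_combination h)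
    · rw [hc1def] at h; simp only [ho.neg_one_pow] at h
      exact hq' ((i : ℕ) + 1) (by omega) (by rw [pow_succ]; linear_combination -h)
  -- the index set S ⊆ Fin (n+1)
  set S : Finset (Fin (n + 1)) :=
    if Even n then Finset.Ioo (0 : Fin (n + 1)) ⟨n, n.lt_succ_self⟩ else Finset.univ with hSdef
  have hcard : S.card = if Even n then n - 1 else n + 1 := by
    rcases Nat.even_or_odd n with he | ho
    · simp [hSdef, he, Fin.card_Ioo]
    · simp [hSdef, Nat.not_even_iff_odd.mpr ho]
  have hmemS : ∀ j : Fin (n + 1), (¬ Even n ∨ (0 < (j : ℕ) ∧ (j : ℕ) < n)) → j ∈ S := by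
    intro j hj
    rcases Nat.even_or_odd n with he | ho
    · rcases hj with h | h
      · exact absurd he h
      · simp [hSdef, he, Finset.mem_Ioo, Fin.lt_def, h.1, h.2]
    · simp [hSdef, Nat.not_even_iff_odd.mpr ho]
  have hmemS' : ∀ j : Fin (n + 1), j ∈ S → Even n → 0 < (j : ℕ) ∧ (j : ℕ) < n := by
    intro j hj he
    simp only [hSdef, if_pos he, Finset.mem_Ioo, Fin.lt_def] at hj
    exact hj
  -- column identities
  have hcol1 : ∀ i : Fin n, Mᵀ (i, 1) =
      c3 i • (Pi.single (i.succ, (3 : Fin 4)) (1 : k) : Fin (n + 1) × Fin 4 → k) :=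
    fun i => dmat_col1 k q n i
  have hcol2 : ∀ i : Fin n, Mᵀ (i, 2) =
      c4 i • (Pi.single (i.castSucc, (3 : Fin 4)) (1 : k) : Fin (n + 1) × Fin 4 → k) :=
    fun i => dmat_col2 k q n i
  have hcol3 : ∀ i : Fin n, Mᵀ (i, 3) = 0 := fun i => dmat_col3 k q n i
  have hcol0a : ∀ i i' : Fin n, Mᵀ (i, 0) (i'.castSucc, 1) = if i' = i then c1 i else 0 :=
    fun i i' => dmat_col0a k q n i i'
  have hcol0b : ∀ (i : Fin n) (j : Fin (n + 1)), Mᵀ (i, 0) (j, 3) = 0 :=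
    fun i j => dmat_col0b k q n i j
  -- the spanning family
  set w : (Fin n ⊕ {j // j ∈ S}) → (Fin (n + 1) × Fin 4 → k) :=
    Sum.elim (fun i => Mᵀ (i, 0)) (fun j => Pi.single (((j : Fin (n + 1)), 3) : Fin (n + 1) × Fin 4) 1)
    with hwdef
  -- membership of singles in the column span
  have hsingle : ∀ j : Fin (n + 1), j ∈ S →
      (Pi.single ((j, 3) : Fin (n + 1) × Fin 4) (1 : k)) ∈ span k (Set.range Mᵀ) := by
    intro j hj
    rcases Nat.eq_zero_or_pos (j : ℕ) with hj0 | hj0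
    · -- use column (0, 2); only possible when n is odd
      have hodd : ¬ Even n := by
        intro he
        exact absurd (hmemS' j hj he).1 (by omega)
      have hi : (0 : ℕ) < n := hn
      set i : Fin n := ⟨0, hi⟩ with hidef
      have hcs : i.castSucc = j := by ext; simp [hidef, hj0]
      have hc4ne : c4 i ≠ 0 := by
        intro h
        rw [hc4def] at h
        simp only [(Nat.not_even_iff_odd.mp hodd).neg_one_pow, hidef] at h
        simp only [pow_zero] at h
        have h2 : q * 2 = 0 := by linear_combination -h
        have h3 : (2 : k) = 0 := by
          rcases mul_eq_zero.mp h2 with h' | h'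
          · exact absurd h' hq
          · exact h'
        exact hne1 (by linear_combination -h3)
      have : Pi.single ((j, 3) : Fin (n + 1) × Fin 4) (1 : k) = (c4 i)⁻¹ • Mᵀ (i, 2) := by
        rw [hcol2 i, hcs, inv_smul_smul₀ hc4ne]
      rw [this]
      exact smul_mem _ _ (subset_span ⟨(i, 2), rfl⟩)
    · -- use column (j-1, 1)
      have hjn : (j : ℕ) ≤ n := by omega
      set i : Fin n := ⟨(j : ℕ) - 1, by omega⟩ with hidef
      have hcs : i.succ = j := by ext; simp [hidef]; omega
      have hc3ne : c3 i ≠ 0 := by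
        intro h
        rw [hc3' i] at h
        rcases Nat.even_or_odd n with he | ho
        · have hjlt : (j : ℕ) < n := (hmemS' j hj he).2
          simp only [he.neg_one_pow] at h
          have hpos : 0 < n - (i : ℕ) - 1 := by simp [hidef]; omega
          exact hq' _ hpos (by linear_combination h)
        · simp only [ho.neg_one_pow] at h
          exact hpow1 (n - (i : ℕ) - 1) (by linear_combination h)
      have : Pi.single ((j, 3) : Fin (n + 1) × Fin 4) (1 : k) = (c3 i)⁻¹ • Mᵀ (i, 1) := by
        rw [hcol1 i, hcs, inv_smul_smul₀ hc3ne]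
      rw [this]
      exact smul_mem _ _ (subset_span ⟨(i, 1), rfl⟩)
  -- span equality
  have hspan : span k (Set.range Mᵀ) = span k (Set.range w) := by
    apply le_antisymm
    · rw [span_le]
      rintro _ ⟨⟨i, a⟩, rfl⟩
      fin_cases a
      · exact subset_span ⟨Sum.inl i, rfl⟩
      · show Mᵀ (i, (1 : Fin 4)) ∈ (span k (Set.range w) : Set (Fin (n + 1) × Fin 4 → k))
        rw [SetLike.mem_coe, hcol1 i]
        by_cases h : c3 i = 0
        · rw [h, zero_smul]; exact zero_mem _
        · have hmem : i.succ ∈ S := by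
            apply hmemS
            rcases Nat.even_or_odd n with he | ho
            · right
              constructor
              · simp
              · -- if i.succ = n then c3 i = 0
                by_contra hlt
                have : (i : ℕ) = n - 1 := by have := i.2; simp at hlt; omega
                apply h
                rw [hc3' i, this, he.neg_one_pow]
                have : n - (n - 1) - 1 = 0 := by omega
                rw [this, pow_zero, sub_self]
            · left; exact Nat.not_even_iff_odd.mpr ho
          exact smul_mem _ _ (subset_span ⟨Sum.inr ⟨i.succ, hmem⟩, rfl⟩)
      · show Mᵀ (i, (2 : Fin 4)) ∈ (span k (Set.range w) : Set (Fin (n + 1) × Fin 4 → k))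
        rw [SetLike.mem_coe, hcol2 i]
        by_cases h : c4 i = 0
        · rw [h, zero_smul]; exact zero_mem _
        · have hmem : i.castSucc ∈ S := by
            apply hmemS
            rcases Nat.even_or_odd n with he | ho
            · right
              constructor
              · -- if i = 0 then c4 i = 0
                by_contra h0
                have hi0 : (i : ℕ) = 0 := by simpa using h0
                apply h
                rw [hc4def]
                simp [hi0, he.neg_one_pow]
              · simpa using i.2
            · left; exact Nat.not_even_iff_odd.mpr ho
          exact smul_mem _ _ (subset_span ⟨Sum.inr ⟨i.castSucc, hmem⟩, rfl⟩)
      · show Mᵀ (i, (3 : Fin 4)) ∈ (span k (Set.range w) : Set (Fin (n + 1) × Fin 4 → k))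
        rw [SetLike.mem_coe, hcol3 i]; exact zero_mem _
    · rw [span_le]
      rintro _ ⟨x, rfl⟩
      rcases x with i | j
      · exact subset_span ⟨(i, 0), rfl⟩
      · exact hsingle j j.2
  -- linear independence of w
  have hli : LinearIndependent k w := by
    apply li_private w
      (Sum.elim (fun i : Fin n => ((i.castSucc, 1) : Fin (n + 1) × Fin 4))
        (fun j : {j // j ∈ S} => (((j : Fin (n + 1)), 3) : Fin (n + 1) × Fin 4)))
    · rintro (i | j)
      · show Mᵀ (i, 0) (i.castSucc, 1) ≠ 0
        rw [hcol0a i i]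
        simpa using hc1 i
      · show (Pi.single (((j : Fin (n + 1)), 3) : Fin (n + 1) × Fin 4) (1 : k) :
            Fin (n + 1) × Fin 4 → k) ((j : Fin (n + 1)), 3) ≠ 0
        simp [Pi.single_apply]
    · rintro (i | j) (i' | j') hne'
      · show Mᵀ (i', 0) (i.castSucc, 1) = 0
        rw [hcol0a i' i]
        have hii : ¬ (i = i') := fun h => hne' (by rw [h])
        simp [hii]
      · show (Pi.single (((j' : Fin (n + 1)), 3) : Fin (n + 1) × Fin 4) (1 : k) :
            Fin (n + 1) × Fin 4 → k) (i.castSucc, 1) = 0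
        rw [Pi.single_apply,
          if_neg (fun h => (by decide : ¬ (1 : Fin 4) = 3) (congrArg Prod.snd h))]
      · show Mᵀ (i', 0) ((j : Fin (n + 1)), 3) = 0
        exact hcol0b i' j
      · show (Pi.single (((j' : Fin (n + 1)), 3) : Fin (n + 1) × Fin 4) (1 : k) :
            Fin (n + 1) × Fin 4 → k) ((j : Fin (n + 1)), 3) = 0
        have hjj : (j : Fin (n + 1)) ≠ (j' : Fin (n + 1)) :=
          fun h => hne' (congrArg Sum.inr (Subtype.ext h.symm))
        rw [Pi.single_apply,
          if_neg (by simp only [Prod.mk.injEq, not_and]; exact fun h _ => hjj h)]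
  -- conclude
  have hrange : LinearMap.range (dMap k q q q⁻¹ n) = span k (Set.range w) := by
    rw [dMap, Matrix.range_mulVecLin]; exact hspan
  rw [hrange, finrank_span_eq_card hli]
  rw [Fintype.card_sum, Fintype.card_fin, Fintype.card_coe, hcard]
  rcases Nat.even_or_odd n with he | ho
  · simp [he]; omega
  · simp [Nat.not_even_iff_odd.mpr ho]; omega

/-- if `char k ≠ 2` and `(α,β) = (q,q⁻¹)`, then `dim Im dₙ = 2n−1`
for `n` even and `2n+1` for `n` odd; consequently `dim Ker d_{n+1} − dim Im dₙ = 2`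
for every `n > 0`, i.e. `dim HHⁿ(Λ, ₁Λ_ψ) = 2`. -/
theorem stmt12 (k : Type) [Field k] (q : k) (hq : q ≠ 0)
    (hq' : ∀ m : ℕ, 0 < m → q ^ m ≠ 1)
    (hchar : ringChar k ≠ 2)
    (n : ℕ) (hn : 1 ≤ n) :
    (Even n → Module.finrank k ↥(LinearMap.range (dMap k q q q⁻¹ n)) = 2 * n - 1) ∧
    (Odd n → Module.finrank k ↥(LinearMap.range (dMap k q q q⁻¹ n)) = 2 * n + 1) ∧
    Module.finrank k ↥(LinearMap.ker (dMap k q q q⁻¹ (n + 1))) =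
      Module.finrank k ↥(LinearMap.range (dMap k q q q⁻¹ n)) + 2 := by
  have h1 := rank_dMap k q hq hq' hchar n hn
  have h2 := rank_dMap k q hq hq' hchar (n + 1) (by omega)
  have hrn := LinearMap.finrank_range_add_finrank_ker (dMap k q q q⁻¹ (n + 1))
  rw [Module.finrank_fintype_fun_eq_card] at hrn
  simp only [Fintype.card_prod, Fintype.card_fin] at hrn
  rcases Nat.even_or_odd n with he | ho
  · have ho' : ¬ Even (n + 1) := by simp [Nat.even_add_one, he]
    rw [if_pos he] at h1
    rw [if_neg ho'] at h2
    refine ⟨fun _ => h1, fun h => absurd h (by simpa using he), ?_⟩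
    rw [h1]; omega
  · have he' : Even (n + 1) := Odd.add_one ho
    rw [if_neg (Nat.not_even_iff_odd.mpr ho)] at h1
    rw [if_pos he'] at h2
    refine ⟨fun h => absurd h (Nat.not_even_iff_odd.mpr ho), fun _ => h1, ?_⟩
    rw [h1]; omega
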